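/- Define I_d(x,y) = \frac{(1-x)^d (1-y)^d}{d} \sum_{j=0}^{d-1} \sum_{k=0}^{d-j-1} (d-j-k) \binom{d-1+k}{k} x^k \binom{d-1+j}{j} y^j for x, y ∈ (0,1). If \frac{x}{1-x} + \frac{y}{1-y} < 1, then \lim_{d→∞} I_d(x,y) = 1 - \frac{x}{1-x} - \frac{y}{1-y}; if \frac{x}{1-x} + \frac{y}{1-y} ≥ 1, then \lim_{d→∞} I_d(x,y) = 0. -/

import Mathlib

set_option maxHeartbeats 1000000

open Filter Finset

namespace Stmt19Aux

noncomputable def Pf (x : ℝ) (e k : ℕ) : ℝ := ((e + k).choose k : ℝ) * x ^ k * (1 - x) ^ (e + 1)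

lemma hs0 {x : ℝ} (hx0 : 0 < x) (hx1 : x < 1) (e : ℕ) :
    HasSum (fun k : ℕ => ((e + k).choose k : ℝ) * x ^ k) (1 / (1 - x) ^ (e + 1)) := by
  have h := hasSum_choose_mul_geometric_of_norm_lt_one (𝕜 := ℝ) e (r := x)
    (by rw [Real.norm_eq_abs, abs_of_pos hx0]; exact hx1)
  convert h using 2 with k
  · rfl
  rw [add_comm e k, Nat.choose_symm_add]

lemma hs1 {x : ℝ} (hx0 : 0 < x) (hx1 : x < 1) (e : ℕ) :
    HasSum (fun k : ℕ => (k : ℝ) * (((e + k).choose k : ℝ) * x ^ k))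
      (((e : ℝ) + 1) * x / (1 - x) ^ (e + 2)) := by
  have h := (hs0 hx0 hx1 (e + 1)).mul_left (((e : ℝ) + 1) * x)
  have h2 : HasSum (fun m : ℕ => ((m + 1 : ℕ) : ℝ) * (((e + (m + 1)).choose (m + 1) : ℝ) * x ^ (m + 1)))
      (((e : ℝ) + 1) * x / (1 - x) ^ (e + 2)) := by
    convert h using 1 with m
    · rfl
    · funext m
      have key : (e + (m + 1)).choose (m + 1) * (m + 1) = (e + 1 + m).choose m * (e + 1) := by
        have := Nat.choose_succ_right_eq (e + m + 1) m
        have h3 : e + m + 1 - m = e + 1 := by omega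
        rw [h3] at this
        rw [show e + (m+1) = e + m + 1 by omega, this, show e + 1 + m = e + m + 1 by omega]
      have : (((e + (m + 1)).choose (m + 1) : ℝ)) * ((m:ℝ) + 1) = ((e + 1 + m).choose m : ℝ) * ((e:ℝ) + 1) := by
        exact_mod_cast congrArg (Nat.cast : ℕ → ℝ) key
      push_cast
      linear_combination x ^ (m + 1) * this
    · ring
  have := (hasSum_nat_add_iff (f := fun k : ℕ => (k : ℝ) * (((e + k).choose k : ℝ) * x ^ k)) 1).mp h2
  simpa using this

lemma hs2 {x : ℝ} (hx0 : 0 < x) (hx1 : x < 1) (e : ℕ) :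
    HasSum (fun k : ℕ => (k : ℝ) * ((k : ℝ) - 1) * (((e + k).choose k : ℝ) * x ^ k))
      (((e : ℝ) + 1) * ((e : ℝ) + 2) * x ^ 2 / (1 - x) ^ (e + 3)) := by
  have h := (hs0 hx0 hx1 (e + 2)).mul_left ((((e : ℝ) + 1) * ((e : ℝ) + 2)) * x ^ 2)
  have h2 : HasSum (fun m : ℕ => ((m + 2 : ℕ) : ℝ) * (((m + 2 : ℕ) : ℝ) - 1) *
        (((e + (m + 2)).choose (m + 2) : ℝ) * x ^ (m + 2)))
      (((e : ℝ) + 1) * ((e : ℝ) + 2) * x ^ 2 / (1 - x) ^ (e + 3)) := by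
    convert h using 1 with m
    · rfl
    · funext m
      have k1 : (e + m + 2).choose (m + 2) * (m + 2) = (e + m + 2).choose (m + 1) * (e + 1) := by
        have := Nat.choose_succ_right_eq (e + m + 2) (m + 1)
        have h3 : e + m + 2 - (m + 1) = e + 1 := by omega
        rw [h3] at this; simpa using this
      have k2 : (e + m + 2).choose (m + 1) * (m + 1) = (e + m + 2).choose m * (e + 2) := by
        have := Nat.choose_succ_right_eq (e + m + 2) m
        have h3 : e + m + 2 - m = e + 2 := by omega
        rw [h3] at this; exact this
      have key : (e + (m + 2)).choose (m + 2) * ((m + 2) * (m + 1)) =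
          (e + 2 + m).choose m * ((e + 1) * (e + 2)) := by
        rw [show e + (m + 2) = e + m + 2 by omega, show e + 2 + m = e + m + 2 by omega]
        nlinarith [k1, k2, Nat.choose_succ_right_eq (e+m+2) m]
      have keyR : (((e + (m + 2)).choose (m + 2) : ℝ)) * (((m:ℝ) + 2) * ((m:ℝ) + 1)) =
          ((e + 2 + m).choose m : ℝ) * (((e:ℝ) + 1) * ((e:ℝ) + 2)) := by
        exact_mod_cast congrArg (Nat.cast : ℕ → ℝ) key
      push_cast
      linear_combination x ^ (m + 2) * keyR
    · ring
  have := (hasSum_nat_add_iff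
    (f := fun k : ℕ => (k : ℝ) * ((k : ℝ) - 1) * (((e + k).choose k : ℝ) * x ^ k)) 2).mp h2
  simpa [Finset.sum_range_succ] using this

lemma Pf_nonneg {x : ℝ} (hx0 : 0 < x) (hx1 : x < 1) (e k : ℕ) : 0 ≤ Pf x e k := by
  unfold Pf
  have h1 : (0:ℝ) ≤ 1 - x := by linarith
  have h2 : (0:ℝ) ≤ x := le_of_lt hx0
  positivity

lemma hsP {x : ℝ} (hx0 : 0 < x) (hx1 : x < 1) (e : ℕ) : HasSum (Pf x e) 1 := by
  have h := (hs0 hx0 hx1 e).mul_right ((1 - x) ^ (e + 1))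
  have hne : (1 - x) ≠ 0 := by linarith
  convert h using 2
  · rfl
  · rfl
  field_simp

lemma hsP1 {x : ℝ} (hx0 : 0 < x) (hx1 : x < 1) (e : ℕ) :
    HasSum (fun k : ℕ => (k : ℝ) * Pf x e k) (((e : ℝ) + 1) * (x / (1 - x))) := by
  have h := (hs1 hx0 hx1 e).mul_right ((1 - x) ^ (e + 1))
  have hne : (1 - x) ≠ 0 := by linarith
  convert h using 1 with k
  · rfl
  · funext k; unfold Pf; ring
  · rw [show e + 2 = (e + 1) + 1 by ring, pow_succ]
    field_simp

lemma hsP2 {x : ℝ} (hx0 : 0 < x) (hx1 : x < 1) (e : ℕ) :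
    HasSum (fun k : ℕ => (k : ℝ) * ((k : ℝ) - 1) * Pf x e k)
      (((e : ℝ) + 1) * ((e : ℝ) + 2) * (x / (1 - x)) ^ 2) := by
  have h := (hs2 hx0 hx1 e).mul_right ((1 - x) ^ (e + 1))
  have hne : (1 - x) ≠ 0 := by linarith
  convert h using 1 with k
  · rfl
  · funext k; unfold Pf; ring
  · rw [show e + 3 = (e + 1) + 2 by ring, pow_add]
    field_simp

lemma hsPq {x : ℝ} (hx0 : 0 < x) (hx1 : x < 1) (e : ℕ) :
    HasSum (fun k : ℕ => ((k : ℝ) / ((e : ℝ) + 1) - x / (1 - x)) ^ 2 * Pf x e k)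
      ((x / (1 - x) + (x / (1 - x)) ^ 2) / ((e : ℝ) + 1)) := by
  obtain ⟨a, ha⟩ : ∃ t : ℝ, x / (1 - x) = t := ⟨_, rfl⟩
  obtain ⟨d, hd⟩ : ∃ t : ℝ, ((e : ℝ) + 1) = t := ⟨_, rfl⟩
  have hd0 : d ≠ 0 := by rw [← hd]; positivity
  have he2 : ((e : ℝ) + 2) = d + 1 := by rw [← hd]; ring
  have H := ((hsP2 hx0 hx1 e).mul_left (1 / d ^ 2)).add
    (((hsP1 hx0 hx1 e).mul_left (1 / d ^ 2 - 2 * a / d)).add ((hsP hx0 hx1 e).mul_left (a ^ 2)))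
  rw [ha, hd, he2] at H
  rw [ha, hd]
  convert H using 1 with k
  · rfl
  · funext k
    field_simp
    ring
  · field_simp
    ring

lemma absP {x : ℝ} (hx0 : 0 < x) (hx1 : x < 1) (e : ℕ) {ε : ℝ} (hε : 0 < ε) :
    Summable (fun k : ℕ => |(k : ℝ) / ((e : ℝ) + 1) - x / (1 - x)| * Pf x e k) ∧
    ∑' k : ℕ, |(k : ℝ) / ((e : ℝ) + 1) - x / (1 - x)| * Pf x e k ≤
      ε + (x / (1 - x) + (x / (1 - x)) ^ 2) / (((e : ℝ) + 1) * ε) := by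
  obtain ⟨a, ha⟩ : ∃ t : ℝ, x / (1 - x) = t := ⟨_, rfl⟩
  obtain ⟨d, hd⟩ : ∃ t : ℝ, ((e : ℝ) + 1) = t := ⟨_, rfl⟩
  have hd0 : (0:ℝ) < d := by rw [← hd]; positivity
  rw [ha, hd]
  have hg : HasSum (fun k : ℕ => ε * Pf x e k + (1 / ε) * (((k : ℝ) / d - a) ^ 2 * Pf x e k))
      (ε * 1 + (1 / ε) * ((a + a ^ 2) / d)) :=
    by have := ((hsP hx0 hx1 e).mul_left ε).add ((hsPq hx0 hx1 e).mul_left (1 / ε))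
       rw [ha, hd] at this; exact this
  have hle : ∀ k : ℕ, |(k : ℝ) / d - a| * Pf x e k ≤
      ε * Pf x e k + (1 / ε) * (((k : ℝ) / d - a) ^ 2 * Pf x e k) := by
    intro k
    have hP := Pf_nonneg hx0 hx1 e k
    have habs : |(k : ℝ) / d - a| ≤ ε + (1 / ε) * ((k : ℝ) / d - a) ^ 2 := by
      set t := (k : ℝ) / d - a with ht
      rcases le_or_gt (|t|) ε with h | h
      · have h0 : 0 ≤ (1 / ε) * t ^ 2 := by positivity
        linarith
      · have h2 : |t| * ε ≤ t ^ 2 := by nlinarith [sq_abs t, abs_nonneg t]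
        have h3 : |t| ≤ (1 / ε) * t ^ 2 := by
          rw [show (1 / ε) * t ^ 2 = t ^ 2 / ε by ring, le_div_iff₀ hε]
          exact h2
        linarith
    exact le_trans (mul_le_mul_of_nonneg_right habs hP) (le_of_eq (by ring))
  have hnn : ∀ k : ℕ, 0 ≤ |(k : ℝ) / d - a| * Pf x e k :=
    fun k => mul_nonneg (abs_nonneg _) (Pf_nonneg hx0 hx1 e k)
  have hsum : Summable (fun k : ℕ => |(k : ℝ) / d - a| * Pf x e k) :=
    Summable.of_nonneg_of_le hnn hle hg.summable
  refine ⟨hsum, ?_⟩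
  have := Summable.tsum_le_tsum hle hsum hg.summable
  rw [hg.tsum_eq] at this
  calc ∑' k : ℕ, |(k : ℝ) / d - a| * Pf x e k ≤ ε * 1 + (1 / ε) * ((a + a ^ 2) / d) := this
    _ = ε + (a + a ^ 2) / (d * ε) := by field_simp

/-- The tsum form of the protocol error. -/
noncomputable def S (x y : ℝ) (e : ℕ) : ℝ :=
  ∑' jk : ℕ × ℕ, Pf y e jk.1 * Pf x e jk.2 * ((((e + 1) - jk.1 - jk.2 : ℕ) : ℝ) / ((e : ℝ) + 1))

lemma g_le_one (e j k : ℕ) : (((e + 1) - j - k : ℕ) : ℝ) / ((e : ℝ) + 1) ≤ 1 := by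
  rw [div_le_one (by positivity)]
  have : (e + 1) - j - k ≤ e + 1 := by omega
  exact_mod_cast Nat.cast_le.mpr this |>.trans (by push_cast; linarith)

lemma g_nonneg (e j k : ℕ) : 0 ≤ (((e + 1) - j - k : ℕ) : ℝ) / ((e : ℝ) + 1) := by positivity

lemma g_eq_max (e j k : ℕ) : (((e + 1) - j - k : ℕ) : ℝ) / ((e : ℝ) + 1) =
    max (1 - (j : ℝ) / ((e : ℝ) + 1) - (k : ℝ) / ((e : ℝ) + 1)) 0 := by
  have hd0 : (0:ℝ) < (e : ℝ) + 1 := by positivity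
  have hcast : ((e + 1 - j - k : ℕ) : ℝ) = max (((e : ℝ) + 1) - j - k) 0 := by
    rcases le_or_gt (j + k) (e + 1) with h | h
    · have h1 : e + 1 - j - k = e + 1 - (j + k) := by omega
      have h2 : ((j : ℝ) + k) ≤ (e : ℝ) + 1 := by exact_mod_cast h
      rw [h1, Nat.cast_sub h, max_eq_left (by push_cast; linarith)]
      push_cast; ring
    · have h1 : e + 1 - j - k = 0 := by omega
      have h2 : ((e : ℝ) + 1) < (j : ℝ) + k := by exact_mod_cast h
      rw [h1, max_eq_right (by linarith)]
      norm_num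
  rw [hcast, ← max_div_div_right hd0.le, zero_div]
  congr 1
  field_simp

lemma g_diff_le {x y : ℝ} (e j k : ℕ) :
    |(((e + 1) - j - k : ℕ) : ℝ) / ((e : ℝ) + 1) - max (1 - x / (1 - x) - y / (1 - y)) 0| ≤
      |(k : ℝ) / ((e : ℝ) + 1) - x / (1 - x)| + |(j : ℝ) / ((e : ℝ) + 1) - y / (1 - y)| := by
  rw [g_eq_max]
  calc |max (1 - (j : ℝ) / ((e : ℝ) + 1) - (k : ℝ) / ((e : ℝ) + 1)) 0 -
      max (1 - x / (1 - x) - y / (1 - y)) 0|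
      ≤ |(1 - (j : ℝ) / ((e : ℝ) + 1) - (k : ℝ) / ((e : ℝ) + 1)) - (1 - x / (1 - x) - y / (1 - y))| :=
        abs_max_sub_max_le_abs _ _ _
    _ = |(x / (1 - x) - (k : ℝ) / ((e : ℝ) + 1)) + (y / (1 - y) - (j : ℝ) / ((e : ℝ) + 1))| := by
        ring_nf
    _ ≤ |x / (1 - x) - (k : ℝ) / ((e : ℝ) + 1)| + |y / (1 - y) - (j : ℝ) / ((e : ℝ) + 1)| :=
        abs_add_le _ _
    _ = _ := by rw [abs_sub_comm, abs_sub_comm (y / (1 - y))]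

lemma main_bound {x y : ℝ} (hx0 : 0 < x) (hx1 : x < 1) (hy0 : 0 < y) (hy1 : y < 1)
    (e : ℕ) {ε : ℝ} (hε : 0 < ε) :
    |S x y e - max (1 - x / (1 - x) - y / (1 - y)) 0| ≤
      2 * ε + (x / (1 - x) + (x / (1 - x)) ^ 2 + (y / (1 - y) + (y / (1 - y)) ^ 2)) /
        (((e : ℝ) + 1) * ε) := by
  have sP := (hsP hx0 hx1 e).summable
  have sQ := (hsP hy0 hy1 e).summable
  have hPnn : ∀ k, 0 ≤ Pf x e k := Pf_nonneg hx0 hx1 e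
  have hQnn : ∀ j, 0 ≤ Pf y e j := Pf_nonneg hy0 hy1 e
  set L : ℝ := max (1 - x / (1 - x) - y / (1 - y)) 0 with hL
  set g : ℕ × ℕ → ℝ := fun jk => (((e + 1) - jk.1 - jk.2 : ℕ) : ℝ) / ((e : ℝ) + 1) with hgdef
  set w : ℕ × ℕ → ℝ := fun jk => Pf y e jk.1 * Pf x e jk.2 with hwdef
  have hwnn : ∀ jk, 0 ≤ w jk := fun jk => mul_nonneg (hQnn _) (hPnn _)
  have sw : Summable w := Summable.mul_of_nonneg sQ sP hQnn hPnn
  have hw1 : ∑' jk, w jk = 1 := by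
    have := Summable.tsum_mul_tsum sQ sP sw
    rw [(hsP hy0 hy1 e).tsum_eq, (hsP hx0 hx1 e).tsum_eq] at this
    simpa using this.symm
  have sWg : Summable (fun jk => w jk * g jk) :=
    Summable.of_nonneg_of_le (fun jk => mul_nonneg (hwnn jk) (g_nonneg e jk.1 jk.2))
      (fun jk => by
        have := g_le_one e jk.1 jk.2
        nlinarith [hwnn jk]) sw
  set A : ℕ → ℝ := fun k => |(k : ℝ) / ((e : ℝ) + 1) - x / (1 - x)| with hA
  set B : ℕ → ℝ := fun j => |(j : ℝ) / ((e : ℝ) + 1) - y / (1 - y)| with hB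
  have sPA : Summable (fun k => A k * Pf x e k) := (absP hx0 hx1 e hε).1
  have sQB : Summable (fun j => B j * Pf y e j) := (absP hy0 hy1 e hε).1
  have s1 : Summable (fun jk : ℕ × ℕ => Pf y e jk.1 * (A jk.2 * Pf x e jk.2)) :=
    Summable.mul_of_nonneg sQ sPA hQnn (fun k => mul_nonneg (abs_nonneg _) (hPnn k))
  have s2 : Summable (fun jk : ℕ × ℕ => (B jk.1 * Pf y e jk.1) * Pf x e jk.2) :=
    Summable.mul_of_nonneg sQB sP (fun j => mul_nonneg (abs_nonneg _) (hQnn j)) hPnn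
  have sM : Summable (fun jk : ℕ × ℕ => Pf y e jk.1 * (A jk.2 * Pf x e jk.2) +
      (B jk.1 * Pf y e jk.1) * Pf x e jk.2) := s1.add s2
  have hsub : S x y e - L = ∑' jk, w jk * (g jk - L) := by
    have h1 : S x y e = ∑' jk, w jk * g jk := rfl
    have h2 : Summable (fun jk => w jk * L) := sw.mul_right L
    rw [h1]
    calc (∑' jk, w jk * g jk) - L = (∑' jk, w jk * g jk) - (∑' jk, w jk) * L := by
          rw [hw1, one_mul]
      _ = (∑' jk, w jk * g jk) - ∑' jk, w jk * L := by rw [tsum_mul_right]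
      _ = ∑' jk, (w jk * g jk - w jk * L) := (Summable.tsum_sub sWg h2).symm
      _ = ∑' jk, w jk * (g jk - L) := by congr 1; funext jk; ring
  have hpt : ∀ jk : ℕ × ℕ, |w jk * (g jk - L)| ≤
      Pf y e jk.1 * (A jk.2 * Pf x e jk.2) + (B jk.1 * Pf y e jk.1) * Pf x e jk.2 := by
    intro jk
    rw [abs_mul, abs_of_nonneg (hwnn jk)]
    have hd := g_diff_le (x := x) (y := y) e jk.1 jk.2
    calc w jk * |g jk - L| ≤ w jk * (A jk.2 + B jk.1) :=
          mul_le_mul_of_nonneg_left hd (hwnn jk)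
      _ = Pf y e jk.1 * (A jk.2 * Pf x e jk.2) + (B jk.1 * Pf y e jk.1) * Pf x e jk.2 := by
          simp only [hwdef]; ring
  have sabs : Summable (fun jk : ℕ × ℕ => |w jk * (g jk - L)|) :=
    Summable.of_nonneg_of_le (fun jk => abs_nonneg _) hpt sM
  have habs : |∑' jk : ℕ × ℕ, w jk * (g jk - L)| ≤ ∑' jk : ℕ × ℕ, |w jk * (g jk - L)| := by
    calc |∑' jk : ℕ × ℕ, w jk * (g jk - L)| = ‖∑' jk : ℕ × ℕ, w jk * (g jk - L)‖ :=
          (Real.norm_eq_abs _).symm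
      _ ≤ ∑' jk : ℕ × ℕ, ‖w jk * (g jk - L)‖ :=
          norm_tsum_le_tsum_norm (by simpa only [Real.norm_eq_abs] using sabs)
      _ = ∑' jk : ℕ × ℕ, |w jk * (g jk - L)| := by simp only [Real.norm_eq_abs]
  have hM : ∑' jk : ℕ × ℕ, |w jk * (g jk - L)| ≤
      ∑' jk : ℕ × ℕ, (Pf y e jk.1 * (A jk.2 * Pf x e jk.2) +
        (B jk.1 * Pf y e jk.1) * Pf x e jk.2) := Summable.tsum_le_tsum hpt sabs sM
  have hsplit : ∑' jk : ℕ × ℕ, (Pf y e jk.1 * (A jk.2 * Pf x e jk.2) +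
      (B jk.1 * Pf y e jk.1) * Pf x e jk.2) =
      (∑' k, A k * Pf x e k) + (∑' j, B j * Pf y e j) := by
    rw [Summable.tsum_add s1 s2]
    have e1 := Summable.tsum_mul_tsum sQ sPA s1
    have e2 := Summable.tsum_mul_tsum sQB sP s2
    rw [(hsP hy0 hy1 e).tsum_eq, one_mul] at e1
    rw [(hsP hx0 hx1 e).tsum_eq, mul_one] at e2
    rw [← e1, ← e2]
  have hx' := (absP hx0 hx1 e hε).2
  have hy' := (absP hy0 hy1 e hε).2
  have hfinal : (x / (1 - x) + (x / (1 - x)) ^ 2) / (((e : ℝ) + 1) * ε) +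
      (y / (1 - y) + (y / (1 - y)) ^ 2) / (((e : ℝ) + 1) * ε) =
      (x / (1 - x) + (x / (1 - x)) ^ 2 + (y / (1 - y) + (y / (1 - y)) ^ 2)) /
        (((e : ℝ) + 1) * ε) := by ring
  rw [hsub]
  calc |∑' jk : ℕ × ℕ, w jk * (g jk - L)| ≤ ∑' jk : ℕ × ℕ, |w jk * (g jk - L)| := habs
    _ ≤ (∑' k, A k * Pf x e k) + (∑' j, B j * Pf y e j) := by rw [← hsplit]; exact hM
    _ ≤ 2 * ε + (x / (1 - x) + (x / (1 - x)) ^ 2 + (y / (1 - y) + (y / (1 - y)) ^ 2)) /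
        (((e : ℝ) + 1) * ε) := by rw [← hfinal]; simp only [hA, hB]; linarith

lemma S_eq_sum (x y : ℝ) (e : ℕ) :
    S x y e = (1 - x) ^ (e + 1) * (1 - y) ^ (e + 1) / ((e + 1 : ℕ) : ℝ) *
      ∑ j ∈ Finset.range (e + 1), ∑ k ∈ Finset.range (e + 1 - j),
        ((e + 1 - j - k : ℕ) : ℝ) * ((e + k).choose k : ℝ) * x ^ k *
          ((e + j).choose j : ℝ) * y ^ j := by
  have hzero : ∀ jk : ℕ × ℕ, jk ∉ (Finset.range (e + 1)) ×ˢ (Finset.range (e + 1)) →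
      Pf y e jk.1 * Pf x e jk.2 * ((((e + 1) - jk.1 - jk.2 : ℕ) : ℝ) / ((e : ℝ) + 1)) = 0 := by
    rintro ⟨j, k⟩ hjk
    rw [Finset.mem_product, Finset.mem_range, Finset.mem_range] at hjk
    have h0 : e + 1 - j - k = 0 := by omega
    rw [h0]
    simp
  rw [S, tsum_eq_sum hzero, Finset.sum_product]
  have hcast : ((e + 1 : ℕ) : ℝ) = (e : ℝ) + 1 := by push_cast; ring
  rw [Finset.mul_sum]
  refine Finset.sum_congr rfl fun j hj => ?_
  have hsub : Finset.range (e + 1 - j) ⊆ Finset.range (e + 1) :=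
    Finset.range_subset_range.2 (by omega)
  rw [← Finset.sum_subset hsub (fun k _ hk => by
    rw [Finset.mem_range, not_lt] at hk
    have h0 : e + 1 - j - k = 0 := by omega
    rw [h0]; simp)]
  rw [Finset.mul_sum]
  refine Finset.sum_congr rfl fun k hk => ?_
  rw [hcast]
  unfold Pf
  ring

end Stmt19Aux

open Stmt19Aux in
theorem stmt_19 (x y : ℝ) (hx : x ∈ Set.Ioo (0:ℝ) 1) (hy : y ∈ Set.Ioo (0:ℝ) 1)
    (I : ℕ → ℝ)
    (hI : ∀ d, 1 ≤ d → I d =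
      (1 - x) ^ d * (1 - y) ^ d / (d : ℝ) *
        ∑ j ∈ Finset.range d, ∑ k ∈ Finset.range (d - j),
          ((d - j - k : ℕ) : ℝ) * ((d - 1 + k).choose k : ℝ) * x ^ k *
            ((d - 1 + j).choose j : ℝ) * y ^ j) :
    (x / (1 - x) + y / (1 - y) < 1 →
        Filter.Tendsto I Filter.atTop (nhds (1 - x / (1 - x) - y / (1 - y)))) ∧
    (1 ≤ x / (1 - x) + y / (1 - y) →
        Filter.Tendsto I Filter.atTop (nhds 0)) := by
  obtain ⟨hx0, hx1⟩ := hx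
  obtain ⟨hy0, hy1⟩ := hy
  have hIS : ∀ e : ℕ, I (e + 1) = S x y e := by
    intro e
    rw [hI (e + 1) (by omega)]
    simp only [Nat.add_sub_cancel]
    rw [S_eq_sum]
  -- the common limit statement
  have hlim : Filter.Tendsto I Filter.atTop (nhds (max (1 - x / (1 - x) - y / (1 - y)) 0)) := by
    rw [Metric.tendsto_atTop]
    intro δ hδ
    obtain ⟨C, hC⟩ : ∃ t : ℝ, x / (1 - x) + (x / (1 - x)) ^ 2 + (y / (1 - y) + (y / (1 - y)) ^ 2) = t := ⟨_, rfl⟩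
    have hC0 : 0 < C := by
      have h1 : 0 < x / (1 - x) := div_pos hx0 (by linarith)
      have h2 : 0 < y / (1 - y) := div_pos hy0 (by linarith)
      rw [← hC]
      positivity
    refine ⟨⌈8 * C / δ ^ 2⌉₊ + 1, fun d hd => ?_⟩
    obtain ⟨e, rfl⟩ : ∃ e, d = e + 1 := ⟨d - 1, by omega⟩
    rw [Real.dist_eq, hIS e]
    have hε : (0:ℝ) < δ / 4 := by linarith
    have hb := main_bound hx0 hx1 hy0 hy1 e hε
    rw [hC] at hb
    have hde : (8 * C / δ ^ 2 : ℝ) < (e : ℝ) + 1 := by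
      have h1 : (8 * C / δ ^ 2 : ℝ) ≤ (⌈8 * C / δ ^ 2⌉₊ : ℝ) := Nat.le_ceil _
      have h2 : (⌈8 * C / δ ^ 2⌉₊ : ℝ) + 1 ≤ (e : ℝ) + 1 := by
        have : (⌈8 * C / δ ^ 2⌉₊ + 1 : ℕ) ≤ e + 1 := hd
        exact_mod_cast this
      linarith
    have hkey : C / (((e : ℝ) + 1) * (δ / 4)) < δ / 2 := by
      rw [div_lt_iff₀ (by positivity)]
      rw [div_lt_iff₀ (by positivity)] at hde
      have hr : δ / 2 * (((e : ℝ) + 1) * (δ / 4)) = ((e : ℝ) + 1) * δ ^ 2 / 8 := by ring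
      rw [hr]
      linarith
    calc |S x y e - max (1 - x / (1 - x) - y / (1 - y)) 0|
        ≤ 2 * (δ / 4) + C / (((e : ℝ) + 1) * (δ / 4)) := hb
      _ < δ := by linarith
  constructor
  · intro h
    have hmax : max (1 - x / (1 - x) - y / (1 - y)) 0 = 1 - x / (1 - x) - y / (1 - y) :=
      max_eq_left (by linarith)
    rw [← hmax]
    exact hlim
  · intro h
    have hmax : max (1 - x / (1 - x) - y / (1 - y)) 0 = 0 :=
      max_eq_right (by linarith)
    rw [← hmax]
    exact hlim
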